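/- Let d ≥ 2 be an integer and let ε and t be real numbers with 0 < ε ≤ d and t ≥ e·d·ln(d/ε). Then d·(1 − (1/d)·(1 − 1/d)^{d−1})^t ≤ ε. -/

import Mathlib

/-- Let `d ≥ 2` be an integer and `ε, t` reals with `0 < ε ≤ d` and
`t ≥ e·d·ln(d/ε)`.  Then `d·(1 - (1/d)·(1 - 1/d)^(d-1))^t ≤ ε`, where the outer power
is the real power. -/
theorem stmt13 (d : ℕ) (hd : 2 ≤ d) (ε t : ℝ) (hε : 0 < ε) (hεd : ε ≤ d)
    (ht : Real.exp 1 * d * Real.log (d / ε) ≤ t) :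
    (d : ℝ) * (1 - (1 / (d : ℝ)) * (1 - 1 / (d : ℝ)) ^ (d - 1)) ^ t ≤ ε := by
  set D : ℝ := (d : ℝ) with hDdef
  have hd2 : (2:ℝ) ≤ D := by rw [hDdef]; exact_mod_cast hd
  have hD0 : (0:ℝ) < D := by linarith
  have hDm : (0:ℝ) < D - 1 := by linarith
  have e1 : (0:ℝ) < Real.exp 1 := Real.exp_pos 1
  have he1 : (1:ℝ) ≤ Real.exp 1 := by
    have := Real.add_one_le_exp (1:ℝ); linarith
  have hcast : ((d - 1 : ℕ) : ℝ) = D - 1 := by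
    have h1 : (1:ℕ) ≤ d := by omega
    push_cast [Nat.cast_sub h1]
    ring
  -- (D/(D-1))^(d-1) ≤ e
  have hA : (D/(D-1)) ^ (d-1) ≤ Real.exp 1 := by
    have h1 : D/(D-1) ≤ Real.exp (1/(D-1)) := by
      have h2 := Real.add_one_le_exp (1/(D-1))
      have h3 : D/(D-1) = 1/(D-1) + 1 := by field_simp; ring
      linarith
    calc (D/(D-1))^(d-1) ≤ (Real.exp (1/(D-1)))^(d-1) :=
          pow_le_pow_left₀ (by positivity) h1 _
      _ = Real.exp ((d-1 : ℕ) * (1/(D-1))) := (Real.exp_nat_mul _ _).symm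
      _ = Real.exp 1 := by rw [hcast]; congr 1; field_simp
  -- key lower bound on the subtracted term
  have hB : 1/(Real.exp 1 * D) ≤ (1/D) * (1 - 1/D)^(d-1) := by
    have h2 : (1 - 1/D) = (D-1)/D := by field_simp
    have h3 : ((D-1)/D)^(d-1) = ((D/(D-1))^(d-1))⁻¹ := by
      rw [← inv_pow, inv_div]
    have hX : (0:ℝ) < (D/(D-1))^(d-1) := by positivity
    have h4 : (Real.exp 1)⁻¹ ≤ ((D/(D-1))^(d-1))⁻¹ :=
      inv_anti₀ hX hA
    have h5 : 1/(Real.exp 1 * D) = (1/D) * (Real.exp 1)⁻¹ := by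
      field_simp
    rw [h2, h3, h5]
    exact mul_le_mul_of_nonneg_left h4 (by positivity)
  set x : ℝ := 1 - (1/D) * (1 - 1/D)^(d-1) with hxdef
  have hx1 : x ≤ 1 - 1/(Real.exp 1 * D) := by
    simp only [hxdef]; linarith
  have hpow1 : (1 - 1/D)^(d-1) ≤ 1 := by
    apply pow_le_one₀ (by
      have : 1/D ≤ 1 := by rw [div_le_one hD0]; linarith
      linarith)
    have : (0:ℝ) < 1/D := by positivity
    linarith
  have hx0 : 0 ≤ x := by
    have h1 : (1/D) * (1 - 1/D)^(d-1) ≤ (1/D) * 1 :=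
      mul_le_mul_of_nonneg_left hpow1 (by positivity)
    have h2 : 1/D ≤ 1 := by rw [div_le_one hD0]; linarith
    simp only [hxdef]; nlinarith
  have hlog : 0 ≤ Real.log (D/ε) := by
    apply Real.log_nonneg
    rw [le_div_iff₀ hε]; linarith
  have ht0 : 0 ≤ t := by
    have : 0 ≤ Real.exp 1 * D * Real.log (D/ε) := by positivity
    linarith
  have heD : (0:ℝ) < Real.exp 1 * D := by positivity
  have hbase0 : (0:ℝ) ≤ 1 - 1/(Real.exp 1 * D) := by
    have h1 : 1/(Real.exp 1 * D) ≤ 1 := by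
      rw [div_le_one heD]; nlinarith
    linarith
  have step1 : x ^ t ≤ (1 - 1/(Real.exp 1 * D)) ^ t :=
    Real.rpow_le_rpow hx0 hx1 ht0
  have step2 : (1 - 1/(Real.exp 1 * D)) ^ t ≤ (Real.exp (-(1/(Real.exp 1 * D)))) ^ t := by
    apply Real.rpow_le_rpow hbase0 _ ht0
    have := Real.add_one_le_exp (-(1/(Real.exp 1 * D)))
    linarith
  have step3 : (Real.exp (-(1/(Real.exp 1 * D)))) ^ t = Real.exp (-(t/(Real.exp 1 * D))) := by
    rw [← Real.exp_mul]
    congr 1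
    field_simp
  have step4 : Real.exp (-(t/(Real.exp 1 * D))) ≤ ε / D := by
    have hεD : (0:ℝ) < ε / D := by positivity
    rw [← Real.exp_log hεD, Real.exp_le_exp]
    have hlogεD : Real.log (ε/D) = - Real.log (D/ε) := by
      rw [← Real.log_inv, inv_div]
    rw [hlogεD, neg_le_neg_iff]
    rw [le_div_iff₀ heD, mul_comm]
    exact ht
  have final : x ^ t ≤ ε / D := le_trans step1 (le_trans step2 (step3 ▸ step4))
  calc D * x ^ t ≤ D * (ε / D) := mul_le_mul_of_nonneg_left final (le_of_lt hD0)
    _ = ε := by field_simp
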